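/- Let F₁,...,Fₘ ∈ k[X₁,...,Xₘ] such that the determinant of the Jacobian matrix of (F₁,...,Fₘ) lies in k*. Then the system Fᵢ(𝒰₁(t),...,𝒰ₘ(t)) = tXᵢ + (1-t)Fᵢ(X₁,...,Xₘ) for all 1 ≤ i ≤ m, with initial conditions 𝒰ᵢ(0) = Xᵢ, has a unique solution 𝒰₁(t),...,𝒰ₘ(t) ∈ k[X₁,...,Xₘ][[t]]. -/

import Mathlib

open MvPolynomial

lemma taylor_dvd {k S : Type*} [CommRing k] [CommRing S] [Algebra k S] {m : ℕ}
    (s : S) (W E : Fin m → S) (hE : ∀ j, s ∣ E j) (P : MvPolynomial (Fin m) k) :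
    s ^ 2 ∣ (aeval (fun j => W j + E j) P - aeval W P -
      ∑ l, aeval W (pderiv l P) * E l) := by
  choose e he using hE
  induction P using MvPolynomial.induction_on with
  | C a => simp
  | add p q hp hq =>
    have := dvd_add hp hq
    convert this using 1
    simp only [map_add, Finset.sum_add_distrib, add_mul]
    ring
  | mul_X p j hp =>
    obtain ⟨qp, hqp⟩ := hp
    refine ⟨W j * qp + e j * (s * qp + ∑ l, aeval W (pderiv l p) * e l), ?_⟩
    have hsum : ∑ l, aeval W (pderiv l (p * X j)) * E l
        = (∑ l, aeval W (pderiv l p) * E l) * W j + aeval W p * E j := by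
      have : ∀ l, aeval W (pderiv l (p * X j)) * E l
          = aeval W (pderiv l p) * E l * W j + aeval W p * (if l = j then E l else 0) := by
        intro l
        rw [pderiv_mul, pderiv_X]
        rcases eq_or_ne l j with h | h
        · subst h; simp; ring
        · simp [Pi.single_apply, h]; ring
      rw [Finset.sum_congr rfl fun l _ => this l, Finset.sum_add_distrib,
        ← Finset.sum_mul, ← Finset.mul_sum]
      simp
    have hA : aeval (fun l => W l + E l) p - aeval W p
        = s * (s * qp) + ∑ l, aeval W (pderiv l p) * E l := by
      linear_combination hqp
    have hS : (∑ x, aeval W (pderiv x p) * (s * e x))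
        = s * ∑ x, aeval W (pderiv x p) * e x := by
      rw [Finset.mul_sum]; exact Finset.sum_congr rfl fun _ _ => by ring
    rw [map_mul, map_mul, aeval_X, aeval_X, hsum]
    calc aeval (fun l => W l + E l) p * (W j + E j) - aeval W p * W j -
          ((∑ l, aeval W (pderiv l p) * E l) * W j + aeval W p * E j)
        = (aeval (fun l => W l + E l) p - aeval W p - ∑ l, aeval W (pderiv l p) * E l) * W j
          + (aeval (fun l => W l + E l) p - aeval W p) * E j := by ring
      _ = s ^ 2 * qp * W j + (s * (s * qp) + ∑ l, aeval W (pderiv l p) * E l) * (s * e j) := by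
          rw [hqp, ← hA, he]
      _ = s ^ 2 * (W j * qp + e j * (s * qp + ∑ l, aeval W (pderiv l p) * e l)) := by
          simp only [he, hS]; ring

lemma coeff_mul_of_X_pow_dvd {R : Type*} [CommRing R] (n : ℕ) (g e : PowerSeries R)
    (he : PowerSeries.X ^ n ∣ e) :
    PowerSeries.coeff n (g * e) =
      PowerSeries.constantCoeff g * PowerSeries.coeff n e := by
  rw [PowerSeries.coeff_mul]
  rw [Finset.sum_eq_single (0, n)]
  · simp [PowerSeries.coeff_zero_eq_constantCoeff]
  · rintro ⟨a, b⟩ hab hne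
    rw [Finset.HasAntidiagonal.mem_antidiagonal] at hab
    have hb : b < n := by
      rcases Nat.lt_or_ge b n with h | h
      · exact h
      · exfalso; apply hne
        have : b = n := le_antisymm (hab ▸ Nat.le_add_left b a) h
        subst this
        simp at hab; simp [hab]
    rw [PowerSeries.X_pow_dvd_iff.mp he b hb, mul_zero]
  · intro h; simp at h

lemma constantCoeff_aeval {k R : Type*} [CommRing k] [CommRing R] [Algebra k R] {m : ℕ}
    (W : Fin m → PowerSeries R) (P : MvPolynomial (Fin m) k) :
    PowerSeries.constantCoeff (aeval W P) =
      aeval (fun j => PowerSeries.constantCoeff (W j)) P := by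
  rw [aeval_def, eval₂_comp_left, aeval_def]
  have h : (PowerSeries.constantCoeff (R := R)).comp (algebraMap k (PowerSeries R)) = algebraMap k R := by
    ext a; simp [PowerSeries.algebraMap_apply]
  rw [h]
  rfl

/-- Coefficient extraction from the first-order Taylor expansion. -/
lemma coeff_taylor {k : Type*} [CommRing k] {m n : ℕ}
    (P : MvPolynomial (Fin m) k) (W E : Fin m → PowerSeries (MvPolynomial (Fin m) k))
    (hE : ∀ j, PowerSeries.X ^ (n+1) ∣ E j)
    (hW : ∀ j, PowerSeries.constantCoeff (W j) = X j) :
    PowerSeries.coeff (n+1) (aeval (fun j => W j + E j) P) =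
      PowerSeries.coeff (n+1) (aeval W P) +
      ∑ l, pderiv l P * PowerSeries.coeff (n+1) (E l) := by
  have htay := taylor_dvd (PowerSeries.X ^ (n+1)) W E hE P
  rw [← pow_mul] at htay
  have h0 := PowerSeries.X_pow_dvd_iff.mp htay (n+1) (by omega)
  rw [map_sub, map_sub, map_sum] at h0
  have hterm : ∀ l, PowerSeries.coeff (n+1) (aeval W (pderiv l P) * E l)
      = pderiv l P * PowerSeries.coeff (n+1) (E l) := by
    intro l
    rw [coeff_mul_of_X_pow_dvd _ _ _ (hE l), constantCoeff_aeval]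
    congr 1
    simp only [hW]
    exact aeval_X_left_apply _
  rw [Finset.sum_congr rfl (fun l _ => hterm l)] at h0
  linear_combination h0

noncomputable def hSeq (k : Type*) [Field k] (m : ℕ) (F : Fin m → MvPolynomial (Fin m) k)
    (Jinv : Matrix (Fin m) (Fin m) (MvPolynomial (Fin m) k))
    (G : Fin m → PowerSeries (MvPolynomial (Fin m) k)) :
    ℕ → Fin m → MvPolynomial (Fin m) k
  | 0 => fun l => X l
  | (n+1) => Jinv.mulVec fun i =>
      PowerSeries.coeff (n+1) (G i) -
      PowerSeries.coeff (n+1) (aeval (fun l => PowerSeries.mk fun d =>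
        if _h : d ≤ n then hSeq k m F Jinv G d l else 0) (F i))
  termination_by n => n
  decreasing_by omega

/-- If `det Jac(F₁,...,Fₘ)` is a nonzero constant, the system
`Fᵢ(𝒰₁,...,𝒰ₘ) = tXᵢ + (1-t)Fᵢ` with `𝒰ᵢ(0) = Xᵢ` has a unique solution in
`k[X₁,...,Xₘ][[t]]`. -/
theorem stmt13 (k : Type*) [Field k] [CharZero k] (m : ℕ)
    (F : Fin m → MvPolynomial (Fin m) k)
    (hJ : ∃ c : k, c ≠ 0 ∧
      Matrix.det (Matrix.of fun i j => pderiv j (F i)) = C c) :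
    ∃! U : Fin m → PowerSeries (MvPolynomial (Fin m) k),
      (∀ i, aeval U (F i) =
        PowerSeries.X * PowerSeries.C (X i) + (1 - PowerSeries.X) * PowerSeries.C (F i)) ∧
      (∀ i, PowerSeries.constantCoeff (U i) = X i) := by
  classical
  obtain ⟨c, hc, hdetC⟩ := hJ
  set J : Matrix (Fin m) (Fin m) (MvPolynomial (Fin m) k) :=
    Matrix.of fun i j => pderiv j (F i) with hJdef
  have hdet : IsUnit J.det := by
    rw [hJdef, hdetC]; exact hc.isUnit.map (C : k →+* MvPolynomial (Fin m) k)
  set G : Fin m → PowerSeries (MvPolynomial (Fin m) k) := fun i =>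
    PowerSeries.X * PowerSeries.C (X i) + (1 - PowerSeries.X) * PowerSeries.C (F i)
    with hGdef
  have hG0 : ∀ i, PowerSeries.constantCoeff (G i) = F i := by
    intro i; simp [hGdef]
  -- existence
  set u : ℕ → Fin m → (MvPolynomial (Fin m) k) := hSeq k m F J⁻¹ G with hu
  set U : Fin m → PowerSeries (MvPolynomial (Fin m) k) := fun l => PowerSeries.mk fun n => u n l with hU
  set Wn : ℕ → Fin m → PowerSeries (MvPolynomial (Fin m) k) := fun n l => PowerSeries.mk fun d =>
    if _h : d ≤ n then u d l else 0 with hWn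
  have hu0 : ∀ l, u 0 l = X l := fun l => by rw [hu, hSeq]
  have hUcc : ∀ l, PowerSeries.constantCoeff (U l) = X l := by
    intro l
    rw [hU, ← PowerSeries.coeff_zero_eq_constantCoeff_apply, PowerSeries.coeff_mk, hu0]
  have hWcc : ∀ n l, PowerSeries.constantCoeff (Wn n l) = X l := by
    intro n l
    rw [hWn, ← PowerSeries.coeff_zero_eq_constantCoeff_apply, PowerSeries.coeff_mk]
    simp [hu0]
  have hEdvd : ∀ n l, PowerSeries.X ^ (n+1) ∣ (U l - Wn n l) := by
    intro n l
    rw [PowerSeries.X_pow_dvd_iff]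
    intro d hd
    have hd' : d ≤ n := by omega
    simp [hU, hWn, PowerSeries.coeff_mk, hd']
  have hEco : ∀ n l, PowerSeries.coeff (n+1) (U l - Wn n l) = u (n+1) l := by
    intro n l
    have : ¬ (n + 1 ≤ n) := by omega
    simp [hU, hWn, PowerSeries.coeff_mk, this]
  -- the key coefficient computation for the constructed solution
  have hmain : ∀ i, aeval U (F i) = G i := by
    intro i
    refine PowerSeries.ext fun n => ?_
    match n with
    | 0 =>
      rw [PowerSeries.coeff_zero_eq_constantCoeff_apply,
        PowerSeries.coeff_zero_eq_constantCoeff_apply, hG0, constantCoeff_aeval]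
      simp only [hUcc]
      exact aeval_X_left_apply _
    | (n+1) =>
      have htc := coeff_taylor (F i) (Wn n) (fun l => U l - Wn n l)
        (fun l => hEdvd n l) (fun l => hWcc n l)
      have hfun : (fun j => Wn n j + (U j - Wn n j)) = U := funext fun j => by ring
      rw [hfun] at htc
      have hsum : ∑ l, pderiv l (F i) * PowerSeries.coeff (n+1) (U l - Wn n l)
          = (J.mulVec (u (n+1))) i := by
        simp only [hEco, Matrix.mulVec, dotProduct, hJdef, Matrix.of_apply]
      have huS : u (n+1) = J⁻¹.mulVec fun i' =>
          PowerSeries.coeff (n+1) (G i') -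
          PowerSeries.coeff (n+1) (aeval (Wn n) (F i')) := by
        rw [hu, hSeq]
      have hJJ : J.mulVec (u (n+1)) = fun i' =>
          PowerSeries.coeff (n+1) (G i') -
          PowerSeries.coeff (n+1) (aeval (Wn n) (F i')) := by
        rw [huS, Matrix.mulVec_mulVec, Matrix.mul_nonsing_inv _ hdet, Matrix.one_mulVec]
      rw [htc, hsum, hJJ]
      ring
  -- uniqueness
  have huniq : ∀ V V' : Fin m → PowerSeries (MvPolynomial (Fin m) k),
      ((∀ i, aeval V (F i) = G i) ∧ (∀ i, PowerSeries.constantCoeff (V i) = X i)) →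
      ((∀ i, aeval V' (F i) = G i) ∧ (∀ i, PowerSeries.constantCoeff (V' i) = X i)) →
      V = V' := by
    rintro V V' ⟨hV1, hV2⟩ ⟨hV'1, hV'2⟩
    have key : ∀ n, ∀ l, PowerSeries.coeff n (V l) = PowerSeries.coeff n (V' l) := by
      intro n
      induction n using Nat.strong_induction_on with
      | _ n ih =>
        match n with
        | 0 =>
          intro l
          rw [PowerSeries.coeff_zero_eq_constantCoeff_apply,
            PowerSeries.coeff_zero_eq_constantCoeff_apply, hV2, hV'2]
        | (n+1) =>
          have hdvd : ∀ j, PowerSeries.X ^ (n+1) ∣ (V j - V' j) := by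
            intro j
            rw [PowerSeries.X_pow_dvd_iff]
            intro d hd
            rw [map_sub, ih d (by omega) j, sub_self]
          set δ : Fin m → (MvPolynomial (Fin m) k) := fun l => PowerSeries.coeff (n+1) (V l - V' l) with hδ
          have hz : J.mulVec δ = 0 := by
            funext i
            have htc := coeff_taylor (F i) V' (fun j => V j - V' j) hdvd hV'2
            have hfun : (fun j => V' j + (V j - V' j)) = V := funext fun j => by ring
            rw [hfun, hV1, hV'1] at htc
            have hz0 : ∑ l, pderiv l (F i) * PowerSeries.coeff (n+1) (V l - V' l) = 0 := by
              linear_combination -htc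
            have hm : J.mulVec δ i
                = ∑ l, pderiv l (F i) * PowerSeries.coeff (n+1) (V l - V' l) := by
              simp only [Matrix.mulVec, dotProduct, hJdef, Matrix.of_apply, hδ]
            simp only [Pi.zero_apply]
            rw [hm, hz0]
          have hδ0 : δ = 0 := by
            have : J⁻¹.mulVec (J.mulVec δ) = δ := by
              rw [Matrix.mulVec_mulVec, Matrix.nonsing_inv_mul _ hdet, Matrix.one_mulVec]
            rw [← this, hz, Matrix.mulVec_zero]
          intro l
          have := congrFun hδ0 l
          simp only [hδ, Pi.zero_apply, map_sub] at this
          exact sub_eq_zero.mp this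
    funext l
    exact PowerSeries.ext fun n => key n l
  refine ⟨U, ⟨hmain, hUcc⟩, ?_⟩
  intro V hV
  exact huniq V U hV ⟨hmain, hUcc⟩
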